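/- Two LPMLN programs P and Q are semi-strongly equivalent under the soft stable model semantics (i.e., SSM(P ∪ R) = SSM(Q ∪ R) for every LPMLN program R) if and only if P and Q have the same soft SE-models. -/

import Mathlib

open scoped Classical

noncomputable section

namespace LPMLN

/-- A ground literal: an atom (numbered by `ℕ`) or its classical negation. -/
inductive Lit where
  | pos : ℕ → Lit
  | neg : ℕ → Lit
deriving DecidableEq

/-- The complementary literal. -/
def Lit.compl : Lit → Lit
  | .pos a => .neg a
  | .neg a => .pos a

/-- A finite set of literals is consistent if it contains no complementary pair. -/
def Consistent (I : Finset Lit) : Prop := ∀ l ∈ I, l.compl ∉ I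

/-- An ASP rule, given by its head, positive body and negative body. -/
structure Rule where
  head : Finset Lit
  pos : Finset Lit
  neg : Finset Lit
deriving DecidableEq

/-- The literals occurring in a rule. -/
def Rule.lits (r : Rule) : Finset Lit := r.head ∪ r.pos ∪ r.neg

/-- Satisfaction of a rule by a set of literals. -/
def Sat (I : Finset Lit) (r : Rule) : Prop :=
  r.pos ⊆ I → r.neg ∩ I = ∅ → (r.head ∩ I).Nonempty

/-- Satisfaction of an ASP program. -/
def SatProg (I : Finset Lit) (prog : Finset Rule) : Prop := ∀ r ∈ prog, Sat I r

/-- The GL-reduct of an ASP program w.r.t. an interpretation. -/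
def glReduct (prog : Finset Rule) (I : Finset Lit) : Finset Rule :=
  (prog.filter fun r => r.neg ∩ I = ∅).image fun r => ⟨r.head, r.pos, ∅⟩

/-- `I` is a stable model of the ASP program `prog`: `I` is a consistent set of
literals satisfying the GL-reduct, no proper subset of which satisfies the GL-reduct. -/
def AspStable (prog : Finset Rule) (I : Finset Lit) : Prop :=
  Consistent I ∧ SatProg I (glReduct prog I) ∧ ∀ J ⊂ I, ¬ SatProg J (glReduct prog I)

/-- A weight: a real number (soft rule) or the symbol `α` (hard rule). -/
inductive Weight where
  | soft : ℝ → Weight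
  | hard : Weight

/-- The real value of a soft weight (hard weights get the dummy value 0). -/
def Weight.val : Weight → ℝ
  | .soft w => w
  | .hard => 0

/-- A weighted rule `w : r`. -/
structure WRule where
  w : Weight
  r : Rule

/-- An LPMLN program: a finite set of weighted rules. -/
abbrev Program := Finset WRule

/-- The LPMLN reduct `P_I`: the rules of `P` satisfied by `I`. -/
def reduct (P : Program) (I : Finset Lit) : Program := P.filter fun wr => Sat I wr.r

/-- The unweighted ASP counterpart of an LPMLN program. -/
def unweighted (P : Program) : Finset Rule := P.image fun wr => wr.r

/-- `I` is a stable model of the LPMLN program `P`: `I` is a stable model of the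
unweighted ASP counterpart of the LPMLN reduct `P_I`. -/
def Stable (P : Program) (I : Finset Lit) : Prop :=
  AspStable (unweighted (reduct P I)) I

/-- The literals occurring in an LPMLN program. -/
def litset (P : Program) : Finset Lit := P.biUnion fun wr => wr.r.lits

/-- `(X, Y)` is an SE-interpretation: a pair of interpretations with `X ⊆ Y`. -/
def SEInterp (X Y : Finset Lit) : Prop := Consistent X ∧ Consistent Y ∧ X ⊆ Y

/-- `(X, Y)` is an SE-model of the LPMLN program `P`: an SE-interpretation such that
`X` satisfies the GL-reduct (w.r.t. `Y`) of the unweighted version of `P_Y`. -/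
def SEModel (P : Program) (X Y : Finset Lit) : Prop :=
  SEInterp X Y ∧ SatProg X (glReduct (unweighted (reduct P Y)) Y)

/-- The number of hard rules of `P` satisfied by `I`. -/
def hardCount (P : Program) (I : Finset Lit) : ℕ :=
  ((reduct P I).filter fun wr => wr.w = Weight.hard).card

/-- The sum of the weights of the soft rules of `P` satisfied by `I`. -/
def softWeight (P : Program) (I : Finset Lit) : ℝ :=
  ∑ wr ∈ ((reduct P I).filter fun wr => wr.w ≠ Weight.hard), wr.w.val

/-- The weight degree `W(P, I) = exp(Σ_{w:r ∈ P_I} w)`, viewed as the real-valued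
function `A ↦ exp(c' + k'·A)` of the value `A` given to the symbol `α`, where `k'` is
the number of hard rules of `P` satisfied by `I` and `c'` the sum of the weights of the
soft rules of `P` satisfied by `I`. -/
def wdeg (P : Program) (I : Finset Lit) (A : ℝ) : ℝ :=
  Real.exp (softWeight P I + A * hardCount P I)

/-- The (finite) set of stable models of `P` (every stable model of `P` is a subset of
`litset P`). -/
def SMset (P : Program) : Finset (Finset Lit) :=
  (litset P).powerset.filter fun I => Stable P I

/-- The probability degree `Pr(P, I)`: the limit, as `α → ∞`, of
`W(P, I) / Σ_{I' ∈ SM(P)} W(P, I')` if `I` is a stable model of `P`, and `0` otherwise. -/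
def PrDeg (P : Program) (I : Finset Lit) : ℝ :=
  if Stable P I then
    Filter.limUnder Filter.atTop fun A => wdeg P I A / ∑ I' ∈ SMset P, wdeg P I' A
  else 0

/-- `I` is a probabilistic stable model of `P`: a stable model of `P` satisfying the
maximum number of hard rules of `P` (equivalently, with nonzero probability degree). -/
def PStable (P : Program) (I : Finset Lit) : Prop :=
  Stable P I ∧ ∀ J, Stable P J → hardCount P J ≤ hardCount P I

/-- Semi-strong equivalence: the extensions by any LPMLN program have the same
stable models. -/
def SemiStrongEq (P Q : Program) : Prop :=
  ∀ R : Program, ∀ I, Stable (P ∪ R) I ↔ Stable (Q ∪ R) I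

/-- p-ordinary equivalence: same stable models and same probability degrees. -/
def POrdEq (P Q : Program) : Prop :=
  (∀ I, Stable P I ↔ Stable Q I) ∧ ∀ I, Stable P I → PrDeg P I = PrDeg Q I

/-- p-strong equivalence: p-ordinary equivalence under every extension. -/
def PStrongEq (P Q : Program) : Prop := ∀ R : Program, POrdEq (P ∪ R) (Q ∪ R)

/-- Comparison of the symbolic weight degrees of two interpretations w.r.t. `P`:
`exp(c + k·α) ≤ exp(c' + k'·α)` iff `k < k'`, or `k = k'` and `c ≤ c'`. -/
def WLe (P : Program) (I J : Finset Lit) : Prop :=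
  hardCount P I < hardCount P J ∨
    (hardCount P I = hardCount P J ∧ softWeight P I ≤ softWeight P J)

/-- q-strong equivalence: same stable models under every extension, with
order-preserving weight degrees. -/
def QStrongEq (P Q : Program) : Prop :=
  ∀ R : Program,
    (∀ I, Stable (P ∪ R) I ↔ Stable (Q ∪ R) I) ∧
    ∀ X Y, Stable (P ∪ R) X → Stable (P ∪ R) Y → (WLe (P ∪ R) X Y ↔ WLe (Q ∪ R) X Y)

/-- A soft stable model of `P`: a stable model of `P` satisfying all hard rules of `P`. -/
def SoftStable (P : Program) (I : Finset Lit) : Prop :=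
  Stable P I ∧ ∀ wr ∈ P, wr.w = Weight.hard → Sat I wr.r

/-- A soft SE-model of `P`: an SE-model `(X, Y)` of `P` such that `Y` satisfies all
hard rules of `P`. -/
def SoftSEModel (P : Program) (X Y : Finset Lit) : Prop :=
  SEModel P X Y ∧ ∀ wr ∈ P, wr.w = Weight.hard → Sat Y wr.r

/-- The (finite) set of soft stable models of `P`. -/
def SSMset (P : Program) : Finset (Finset Lit) :=
  (litset P).powerset.filter fun I => SoftStable P I

/-- The probability degree under the soft stable model semantics:
`Pr_s(P, X) = W_s(P, X) / Σ_{X' ∈ SSM(P)} W_s(P, X')`, where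
`W_s(P, X) = exp(Σ_{w:r ∈ P^s, X ⊨ r} w)`. -/
def PrS (P : Program) (X : Finset Lit) : ℝ :=
  Real.exp (softWeight P X) / ∑ X' ∈ SSMset P, Real.exp (softWeight P X')

/-- sp-strong equivalence: p-strong equivalence under the soft stable model
semantics. -/
def SPStrongEq (P Q : Program) : Prop :=
  ∀ R : Program,
    (∀ I, SoftStable (P ∪ R) I ↔ SoftStable (Q ∪ R) I) ∧
    ∀ X, SoftStable (P ∪ R) X → PrS (P ∪ R) X = PrS (Q ∪ R) X

/-- `(X, Y)` is a UE-model of `P`: an SE-model with `X = Y`, or with `X ⊊ Y` such that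
no `X'` strictly between `X` and `Y` gives an SE-model `(X', Y)`. -/
def UEModel (P : Program) (X Y : Finset Lit) : Prop :=
  SEModel P X Y ∧
    (X = Y ∨ (X ⊂ Y ∧ ∀ X', X ⊂ X' → X' ⊂ Y → ¬ SEModel P X' Y))

/-- A program consisting of weighted facts only (rules with empty bodies). -/
def IsFactProg (R : Program) : Prop := ∀ wr ∈ R, wr.r.pos = ∅ ∧ wr.r.neg = ∅

/-- p-uniform equivalence: p-ordinary equivalence under every extension by a set of
weighted facts. -/
def PUniformEq (P Q : Program) : Prop :=
  ∀ R : Program, IsFactProg R → POrdEq (P ∪ R) (Q ∪ R)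

/-- The flattening rules `R(X, Y, a)`: the two hard rules
`α : ← X, not Y, a` and `α : a ← X, not Y`. -/
def flatten (X Y : Finset Lit) (a : ℕ) : Program :=
  {⟨Weight.hard, ⟨∅, X ∪ {Lit.pos a}, Y⟩⟩, ⟨Weight.hard, ⟨{Lit.pos a}, X, Y⟩⟩}

/-- The hard fact `α : l`. -/
def factOf (l : Lit) : WRule := ⟨Weight.hard, ⟨{l}, ∅, ∅⟩⟩

/-- The base flattening extension `E⁰(P, U) = P ∪ {α : a | a ∈ U}`. -/
def E0 (P : Program) (U : Finset Lit) : Program := P ∪ U.image factOf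

/-- `IsFlatExt P U k E` holds iff `E` is a flattening extension `E^k(P, U)`:
`E⁰(P, U) = P ∪ {α : a | a ∈ U}` and `E^{i+1}(P, U) = E^i(P, U) ∪ R(X ∩ U, U − X, c)`
where `X` is a probabilistic stable model of `E^i(P, U)` and `c` is a fresh atom. -/
inductive IsFlatExt (P : Program) (U : Finset Lit) : ℕ → Program → Prop
  | zero : IsFlatExt P U 0 (E0 P U)
  | succ {i : ℕ} {E : Program} {X : Finset Lit} {c : ℕ} :
      IsFlatExt P U i E → PStable E X →
      Lit.pos c ∉ litset E → Lit.neg c ∉ litset E →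
      IsFlatExt P U (i + 1) (E ∪ flatten (X ∩ U) (U \ X) c)
section Aux

lemma consistent_mono {X Y : Finset Lit} (h : X ⊆ Y) (hY : Consistent Y) : Consistent X :=
  fun l hl hc => hY l (h hl) (h hc)

lemma satRed_iff (P : Program) (X Y : Finset Lit) :
    SatProg X (glReduct (unweighted (reduct P Y)) Y) ↔
      ∀ wr ∈ P, Sat Y wr.r → wr.r.neg ∩ Y = ∅ → wr.r.pos ⊆ X → (wr.r.head ∩ X).Nonempty := by
  constructor
  · intro h wr hwr hsat hneg hpos
    have hmem : (⟨wr.r.head, wr.r.pos, ∅⟩ : Rule) ∈ glReduct (unweighted (reduct P Y)) Y := by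
      refine Finset.mem_image_of_mem _ (Finset.mem_filter.mpr ⟨?_, hneg⟩)
      exact Finset.mem_image_of_mem _ (Finset.mem_filter.mpr ⟨hwr, hsat⟩)
    exact h ⟨wr.r.head, wr.r.pos, ∅⟩ hmem hpos (Finset.empty_inter X)
  · intro h r' hr'
    obtain ⟨r, hr, rfl⟩ := Finset.mem_image.mp hr'
    obtain ⟨hr1, hneg⟩ := Finset.mem_filter.mp hr
    obtain ⟨wr, hwr2, rfl⟩ := Finset.mem_image.mp hr1
    obtain ⟨hwrP, hsat⟩ := Finset.mem_filter.mp hwr2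
    intro hpos _
    exact h wr hwrP hsat hneg hpos

lemma satProg_union {I : Finset Lit} {A B : Finset Rule} :
    SatProg I (A ∪ B) ↔ SatProg I A ∧ SatProg I B := by
  constructor
  · intro h
    exact ⟨fun r hr => h r (Finset.mem_union_left _ hr),
           fun r hr => h r (Finset.mem_union_right _ hr)⟩
  · intro h r hr
    rcases Finset.mem_union.mp hr with h1 | h1
    · exact h.1 r h1
    · exact h.2 r h1

lemma red_union (P R : Program) (Y : Finset Lit) :
    glReduct (unweighted (reduct (P ∪ R) Y)) Y =
      glReduct (unweighted (reduct P Y)) Y ∪ glReduct (unweighted (reduct R Y)) Y := by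
  simp only [glReduct, unweighted, reduct, Finset.filter_union, Finset.image_union]

lemma self_sat (P : Program) (Y : Finset Lit) :
    SatProg Y (glReduct (unweighted (reduct P Y)) Y) :=
  (satRed_iff P Y Y).mpr fun _ _ hsat hneg hpos => hsat hpos hneg

/-- Soft facts `0 : l` for each `l ∈ S`. -/
def facts (S : Finset Lit) : Program := S.image fun l => ⟨Weight.soft 0, ⟨{l}, ∅, ∅⟩⟩

/-- Soft rules `0 : p ← q` for all `p, q ∈ S`. -/
def pairs (S : Finset Lit) : Program :=
  (S ×ˢ S).image fun pq => ⟨Weight.soft 0, ⟨{pq.1}, {pq.2}, ∅⟩⟩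

lemma facts_soft {S : Finset Lit} : ∀ wr ∈ facts S, wr.w ≠ Weight.hard := by
  intro wr hwr
  obtain ⟨l, _, rfl⟩ := Finset.mem_image.mp hwr
  exact fun hcon => Weight.noConfusion hcon

lemma pairs_soft {S : Finset Lit} : ∀ wr ∈ pairs S, wr.w ≠ Weight.hard := by
  intro wr hwr
  obtain ⟨pq, _, rfl⟩ := Finset.mem_image.mp hwr
  exact fun hcon => Weight.noConfusion hcon

lemma satRed_facts {S Y J : Finset Lit} (hSY : S ⊆ Y) :
    SatProg J (glReduct (unweighted (reduct (facts S) Y)) Y) ↔ S ⊆ J := by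
  rw [satRed_iff]
  constructor
  · intro h l hl
    have hs : Sat Y (⟨{l}, ∅, ∅⟩ : Rule) := fun _ _ =>
      ⟨l, Finset.mem_inter.mpr ⟨Finset.mem_singleton_self l, hSY hl⟩⟩
    have hmem : (⟨Weight.soft 0, ⟨{l}, ∅, ∅⟩⟩ : WRule) ∈ facts S :=
      Finset.mem_image_of_mem _ hl
    obtain ⟨m, hm⟩ := h _ hmem hs (Finset.empty_inter Y) (Finset.empty_subset J)
    rw [Finset.mem_inter, Finset.mem_singleton] at hm
    exact hm.1 ▸ hm.2
  · intro h wr hwr _ _ _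
    obtain ⟨l, hl, rfl⟩ := Finset.mem_image.mp hwr
    exact ⟨l, Finset.mem_inter.mpr ⟨Finset.mem_singleton_self l, h hl⟩⟩

lemma satRed_pairs {S Y J : Finset Lit} (hSY : S ⊆ Y) :
    SatProg J (glReduct (unweighted (reduct (pairs S) Y)) Y) ↔
      ∀ p ∈ S, ∀ q ∈ S, q ∈ J → p ∈ J := by
  rw [satRed_iff]
  constructor
  · intro h p hp q hq hqJ
    have hs : Sat Y (⟨{p}, {q}, ∅⟩ : Rule) := fun _ _ =>
      ⟨p, Finset.mem_inter.mpr ⟨Finset.mem_singleton_self p, hSY hp⟩⟩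
    have hmem : (⟨Weight.soft 0, ⟨{p}, {q}, ∅⟩⟩ : WRule) ∈ pairs S :=
      Finset.mem_image.mpr ⟨(p, q), Finset.mem_product.mpr ⟨hp, hq⟩, rfl⟩
    obtain ⟨m, hm⟩ := h _ hmem hs (Finset.empty_inter Y)
      (Finset.singleton_subset_iff.mpr hqJ)
    rw [Finset.mem_inter, Finset.mem_singleton] at hm
    exact hm.1 ▸ hm.2
  · intro h wr hwr _ _ hpos
    obtain ⟨⟨p, q⟩, hpq, rfl⟩ := Finset.mem_image.mp hwr
    obtain ⟨hp, hq⟩ := Finset.mem_product.mp hpq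
    exact ⟨p, Finset.mem_inter.mpr ⟨Finset.mem_singleton_self p,
      h p hp q hq (hpos (Finset.mem_singleton_self q))⟩⟩

lemma lemA (P Q R : Program)
    (hse : ∀ X Y, SoftSEModel P X Y ↔ SoftSEModel Q X Y)
    (I : Finset Lit) (hI : SoftStable (P ∪ R) I) : SoftStable (Q ∪ R) I := by
  obtain ⟨⟨hc, hsat, hmin⟩, hhard⟩ := hI
  rw [red_union, satProg_union] at hsat
  have hPhard : ∀ wr ∈ P, wr.w = Weight.hard → Sat I wr.r :=
    fun wr h1 => hhard wr (Finset.mem_union_left _ h1)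
  have hSEP : SoftSEModel P I I := ⟨⟨⟨hc, hc, subset_rfl⟩, hsat.1⟩, hPhard⟩
  have hSEQ := (hse I I).mp hSEP
  refine ⟨⟨hc, ?_, ?_⟩, ?_⟩
  · rw [red_union, satProg_union]
    exact ⟨hSEQ.1.2, hsat.2⟩
  · intro J hJ hJsat
    rw [red_union, satProg_union] at hJsat
    have hJsub : J ⊆ I := (Finset.ssubset_def.mp hJ).1
    have hJc : Consistent J := consistent_mono hJsub hc
    have hQJ : SoftSEModel Q J I := ⟨⟨⟨hJc, hc, hJsub⟩, hJsat.1⟩, hSEQ.2⟩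
    have hPJ := (hse J I).mpr hQJ
    refine hmin J hJ ?_
    rw [red_union, satProg_union]
    exact ⟨hPJ.1.2, hJsat.2⟩
  · intro wr hwr hh
    rcases Finset.mem_union.mp hwr with h1 | h1
    · exact hSEQ.2 wr h1 hh
    · exact hhard wr (Finset.mem_union_right _ h1) hh

lemma lemB (P Q : Program)
    (h : ∀ R : Program, ∀ I, SoftStable (P ∪ R) I ↔ SoftStable (Q ∪ R) I)
    (X Y : Finset Lit) (hXY : SoftSEModel P X Y) : SoftSEModel Q X Y := by
  obtain ⟨⟨⟨cX, cY, hsub⟩, hXsat⟩, hHardP⟩ := hXY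
  -- Step 1: Y satisfies the hard rules of Q
  have hYstab : SoftStable (P ∪ facts Y) Y := by
    refine ⟨⟨cY, ?_, ?_⟩, ?_⟩
    · rw [red_union, satProg_union]
      exact ⟨self_sat P Y, (satRed_facts (subset_refl Y)).mpr (subset_refl Y)⟩
    · intro J hJ hJsat
      rw [red_union, satProg_union] at hJsat
      exact (Finset.ssubset_def.mp hJ).2 ((satRed_facts (subset_refl Y)).mp hJsat.2)
    · intro wr hwr hh
      rcases Finset.mem_union.mp hwr with h1 | h1
      · exact hHardP wr h1 hh
      · exact absurd hh (facts_soft wr h1)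
  have hYstabQ := (h (facts Y) Y).mp hYstab
  have hHardQ : ∀ wr ∈ Q, wr.w = Weight.hard → Sat Y wr.r :=
    fun wr hwr hh => hYstabQ.2 wr (Finset.mem_union_left _ hwr) hh
  -- Step 2: X satisfies the reduct of Q w.r.t. Y
  have hSdiff : Y \ X ⊆ Y := Finset.sdiff_subset
  have hXsatQ : SatProg X (glReduct (unweighted (reduct Q Y)) Y) := by
    by_contra hno
    have hne : X ≠ Y := by rintro rfl; exact hno (self_sat Q X)
    have hss : X ⊂ Y := Finset.ssubset_iff_subset_ne.mpr ⟨hsub, hne⟩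
    have hQstab : SoftStable (Q ∪ (facts X ∪ pairs (Y \ X))) Y := by
      refine ⟨⟨cY, ?_, ?_⟩, ?_⟩
      · rw [red_union, red_union, satProg_union, satProg_union]
        refine ⟨self_sat Q Y, (satRed_facts hsub).mpr hsub, ?_⟩
        exact (satRed_pairs hSdiff).mpr fun p hp _ _ _ => hSdiff hp
      · intro J hJ hJsat
        rw [red_union, red_union, satProg_union, satProg_union] at hJsat
        obtain ⟨hQJ, hFJ, hPJ⟩ := hJsat
        have hXJ : X ⊆ J := (satRed_facts hsub).mp hFJ
        have hJsub : J ⊆ Y := (Finset.ssubset_def.mp hJ).1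
        by_cases hcase : ∃ q ∈ Y \ X, q ∈ J
        · obtain ⟨q, hqS, hqJ⟩ := hcase
          have hall : ∀ p ∈ Y \ X, p ∈ J :=
            fun p hp => ((satRed_pairs hSdiff).mp hPJ) p hp q hqS hqJ
          have hYJ : Y ⊆ J := by
            intro l hl
            by_cases hlX : l ∈ X
            · exact hXJ hlX
            · exact hall l (Finset.mem_sdiff.mpr ⟨hl, hlX⟩)
          exact (Finset.ssubset_def.mp hJ).2 hYJ
        · have hJX : J ⊆ X := by
            intro l hl
            by_contra hlX
            exact hcase ⟨l, Finset.mem_sdiff.mpr ⟨hJsub hl, hlX⟩, hl⟩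
          have hJeq : J = X := Finset.Subset.antisymm hJX hXJ
          exact hno (hJeq ▸ hQJ)
      · intro wr hwr hh
        rcases Finset.mem_union.mp hwr with h1 | h1
        · exact hHardQ wr h1 hh
        · rcases Finset.mem_union.mp h1 with h2 | h2
          · exact absurd hh (facts_soft wr h2)
          · exact absurd hh (pairs_soft wr h2)
    have hPstab := (h (facts X ∪ pairs (Y \ X)) Y).mpr hQstab
    obtain ⟨⟨_, _, hmin⟩, _⟩ := hPstab
    refine hmin X hss ?_
    rw [red_union, red_union, satProg_union, satProg_union]
    refine ⟨hXsat, (satRed_facts hsub).mpr (subset_refl X), ?_⟩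
    exact (satRed_pairs hSdiff).mpr fun p hp q hq hqX =>
      absurd hqX (Finset.mem_sdiff.mp hq).2
  exact ⟨⟨⟨cX, cY, hsub⟩, hXsatQ⟩, hHardQ⟩

end Aux



/-- Two LPMLN programs `P` and `Q` are semi-strongly equivalent under the
soft stable model semantics (i.e., `SSM(P ∪ R) = SSM(Q ∪ R)` for every LPMLN program
`R`) if and only if `P` and `Q` have the same soft SE-models. -/
theorem semiStrongEq_ssm_iff_same_softSEModels (P Q : Program) :
    (∀ R : Program, ∀ I, SoftStable (P ∪ R) I ↔ SoftStable (Q ∪ R) I) ↔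
      (∀ X Y, SoftSEModel P X Y ↔ SoftSEModel Q X Y) := by
  constructor
  · intro h X Y
    exact ⟨lemB P Q h X Y, lemB Q P (fun R I => (h R I).symm) X Y⟩
  · intro h R I
    exact ⟨lemA P Q R h I, lemA Q P R (fun X Y => (h X Y).symm) I⟩

end LPMLN
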